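/- arXiv:2410.06012 — 2 statements merged into one kernel-verified Lean document; each statement's English description precedes it below -/
import Mathlib

section
/- (Change of the validation loss under one training update, the cross-term bound in the proof of Theorem 1). Let E be a finite-dimensional real inner product space, L ≥ 0, λ ≥ 0, ρ ≥ 0, σ ≥ 0. Let G : E → ℝ be differentiable and L-smooth, and let v ∈ E with ‖v‖ ≤ ρ (playing the role of the training gradient ∇H(α)), u ∈ E with ‖u‖ ≤ λ, and η ≥ 0. Let φ be an E-valued square-integrable random vector with E[φ] = 0 and E[‖φ‖²] ≤ σ², and assume ω ↦ G(α − η(v + φ(ω) + u)) is integrable. Then for every α ∈ E, E[G(α − η(v + φ + u))] − G(α) ≤ η(ρ + λ)‖∇G(α)‖ + (Lη²/2)((ρ + λ)² + σ²). -/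
open MeasureTheory
open scoped InnerProductSpace

lemma descent_lemma_aux {E : Type*} [NormedAddCommGroup E] [InnerProductSpace ℝ E] [CompleteSpace E]
    {L : ℝ} (G : E → ℝ) (hdiff : Differentiable ℝ G)
    (hsmooth : ∀ x y : E, ‖gradient G x - gradient G y‖ ≤ L * ‖x - y‖)
    (x y : E) :
    G y ≤ G x + ⟪gradient G x, y - x⟫_ℝ + L / 2 * ‖y - x‖ ^ 2 := by
  set d := y - x with hd
  have hder : ∀ t : ℝ, HasDerivAt (fun t : ℝ => G (x + t • d))
      ⟪gradient G (x + t • d), d⟫_ℝ t := by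
    intro t
    have h1 : HasDerivAt (fun t : ℝ => x + t • d) d t := by
      simpa using ((hasDerivAt_id t).smul_const d).const_add x
    have h2 := ((hdiff (x + t • d)).hasGradientAt).hasFDerivAt
    have := h2.comp_hasDerivAt t h1
    simp only [InnerProductSpace.toDual_apply_apply] at this
    exact this
  set F : ℝ → ℝ := fun t =>
    G (x + t • d) - t * ⟪gradient G x, d⟫_ℝ - L / 2 * t ^ 2 * ‖d‖ ^ 2 with hF
  have hFder : ∀ t : ℝ, HasDerivAt F
      (⟪gradient G (x + t • d), d⟫_ℝ - ⟪gradient G x, d⟫_ℝ - L * t * ‖d‖ ^ 2) t := by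
    intro t
    have h1 : HasDerivAt (fun t : ℝ => t * ⟪gradient G x, d⟫_ℝ)
        ⟪gradient G x, d⟫_ℝ t := by
      simpa using (hasDerivAt_id t).mul_const ⟪gradient G x, d⟫_ℝ
    have h2 : HasDerivAt (fun t : ℝ => L / 2 * t ^ 2 * ‖d‖ ^ 2)
        (L * t * ‖d‖ ^ 2) t := by
      have := ((hasDerivAt_pow 2 t).const_mul (L / 2)).mul_const (‖d‖ ^ 2)
      exact this.congr_deriv (by ring)
    exact ((hder t).sub h1).sub h2
  have hanti : AntitoneOn F (Set.Icc (0 : ℝ) 1) := by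
    apply antitoneOn_of_deriv_nonpos (convex_Icc 0 1)
    · exact fun t _ => (hFder t).continuousAt.continuousWithinAt
    · exact fun t _ => (hFder t).differentiableAt.differentiableWithinAt
    · intro t ht
      rw [interior_Icc] at ht
      rw [(hFder t).deriv]
      have h1 : ⟪gradient G (x + t • d) - gradient G x, d⟫_ℝ ≤
          ‖gradient G (x + t • d) - gradient G x‖ * ‖d‖ := real_inner_le_norm _ _
      have h2 : ‖gradient G (x + t • d) - gradient G x‖ ≤ L * ‖t • d‖ := by
        simpa using hsmooth (x + t • d) x
      have h3 : ‖t • d‖ = t * ‖d‖ := by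
        rw [norm_smul, Real.norm_eq_abs, abs_of_nonneg ht.1.le]
      rw [inner_sub_left] at h1
      rw [h3] at h2
      have h4 := mul_le_mul_of_nonneg_right h2 (norm_nonneg d)
      have h5 : L * (t * ‖d‖) * ‖d‖ = L * t * ‖d‖ ^ 2 := by ring
      linarith
  have h01 := hanti (Set.left_mem_Icc.2 zero_le_one) (Set.right_mem_Icc.2 zero_le_one)
    zero_le_one
  have hF0 : F 0 = G x := by simp [hF]
  have hF1 : F 1 = G y - ⟪gradient G x, d⟫_ℝ - L / 2 * ‖d‖ ^ 2 := by
    simp [hF, hd]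
  rw [hF0, hF1] at h01
  linarith

/-- **Change of the validation loss under one training update** (the cross-term bound in the
proof of Theorem 1 of "Generalized Sparse Additive Model with Unknown Link Function").
If `G` is differentiable and `L`-smooth, `v` plays the role of the training gradient with
`‖v‖ ≤ ρ`, `u` is a regularizer (sub)gradient with `‖u‖ ≤ λ`, `η ≥ 0`, and `φ` is a
square-integrable centered noise with `E[‖φ‖²] ≤ σ²`, then for every `α`,
`E[G(α − η(v + φ + u))] − G(α) ≤ η(ρ + λ)‖∇G(α)‖ + (Lη²/2)((ρ + λ)² + σ²)`. -/
theorem validation_loss_change_under_training_update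
    {E : Type*} [NormedAddCommGroup E] [InnerProductSpace ℝ E] [FiniteDimensional ℝ E]
    {Ω : Type*} [MeasurableSpace Ω] (μ : Measure Ω) [IsProbabilityMeasure μ]
    {L lam ρ σ : ℝ} (hL : 0 ≤ L) (hlam : 0 ≤ lam) (hρ : 0 ≤ ρ) (hσ : 0 ≤ σ)
    (G : E → ℝ)
    (hdiff : Differentiable ℝ G)
    (hsmooth : ∀ x y : E, ‖gradient G x - gradient G y‖ ≤ L * ‖x - y‖)
    (v : E) (hv : ‖v‖ ≤ ρ) (u : E) (hu : ‖u‖ ≤ lam) (η : ℝ) (hη : 0 ≤ η)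
    (φ : Ω → E) (hφ2 : MemLp φ 2 μ)
    (hmean : ∫ ω, φ ω ∂μ = 0)
    (hvar : ∫ ω, ‖φ ω‖ ^ 2 ∂μ ≤ σ ^ 2)
    (α : E)
    (hint : Integrable (fun ω => G (α - η • (v + φ ω + u))) μ) :
    (∫ ω, G (α - η • (v + φ ω + u)) ∂μ) - G α ≤
      η * (ρ + lam) * ‖gradient G α‖
        + (L * η ^ 2 / 2) * ((ρ + lam) ^ 2 + σ ^ 2) := by
  set g := gradient G α with hg
  have hφ_int : Integrable φ μ := hφ2.integrable one_le_two
  have hφ_sq : Integrable (fun ω => ‖φ ω‖ ^ 2) μ := by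
    convert hφ2.integrable_norm_rpow two_ne_zero ENNReal.ofNat_ne_top with ω
    rw [show ((2:ENNReal)).toReal = ((2:ℕ):ℝ) by norm_num, Real.rpow_natCast]
  -- pointwise bound
  have key : ∀ ω, G (α - η • (v + φ ω + u)) ≤
      (G α - η * ⟪g, v + u⟫_ℝ + L * η ^ 2 / 2 * ‖v + u‖ ^ 2)
      + (-η) * ⟪g, φ ω⟫_ℝ + (L * η ^ 2) * ⟪v + u, φ ω⟫_ℝ
      + (L * η ^ 2 / 2) * ‖φ ω‖ ^ 2 := by
    intro ω
    have h := descent_lemma_aux G hdiff hsmooth α (α - η • (v + φ ω + u))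
    have hz : α - η • (v + φ ω + u) - α = -(η • ((v + u) + φ ω)) := by
      rw [sub_sub_cancel_left]
      congr 1
      congr 1
      abel
    rw [hz] at h
    have hin : ⟪g, -(η • ((v + u) + φ ω))⟫_ℝ
        = -η * (⟪g, v + u⟫_ℝ + ⟪g, φ ω⟫_ℝ) := by
      rw [inner_neg_right, real_inner_smul_right, inner_add_right]; ring
    have hnr : ‖-(η • ((v + u) + φ ω))‖ ^ 2
        = η ^ 2 * (‖v + u‖ ^ 2 + 2 * ⟪v + u, φ ω⟫_ℝ + ‖φ ω‖ ^ 2) := by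
      rw [norm_neg, norm_smul, mul_pow, norm_add_sq_real, Real.norm_eq_abs, sq_abs]
    rw [hin, hnr] at h
    calc G (α - η • (v + φ ω + u)) ≤ G α + -η * (⟪g, v + u⟫_ℝ + ⟪g, φ ω⟫_ℝ)
          + L / 2 * (η ^ 2 * (‖v + u‖ ^ 2 + 2 * ⟪v + u, φ ω⟫_ℝ + ‖φ ω‖ ^ 2)) := h
      _ = _ := by ring
  -- integrability of the RHS
  have hI1 : Integrable (fun ω => (-η) * ⟪g, φ ω⟫_ℝ) μ :=
    (hφ_int.const_inner g).const_mul (-η)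
  have hI2 : Integrable (fun ω => (L * η ^ 2) * ⟪v + u, φ ω⟫_ℝ) μ :=
    (hφ_int.const_inner (v + u)).const_mul (L * η ^ 2)
  have hI3 : Integrable (fun ω => (L * η ^ 2 / 2) * ‖φ ω‖ ^ 2) μ :=
    hφ_sq.const_mul (L * η ^ 2 / 2)
  have hIC : Integrable (fun _ : Ω =>
      G α - η * ⟪g, v + u⟫_ℝ + L * η ^ 2 / 2 * ‖v + u‖ ^ 2) μ := integrable_const _
  have hIa : Integrable (fun ω =>
      (G α - η * ⟪g, v + u⟫_ℝ + L * η ^ 2 / 2 * ‖v + u‖ ^ 2)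
      + (-η) * ⟪g, φ ω⟫_ℝ) μ := hIC.add hI1
  have hIab : Integrable (fun ω =>
      (G α - η * ⟪g, v + u⟫_ℝ + L * η ^ 2 / 2 * ‖v + u‖ ^ 2)
      + (-η) * ⟪g, φ ω⟫_ℝ + (L * η ^ 2) * ⟪v + u, φ ω⟫_ℝ) μ := hIa.add hI2
  have hRHS : Integrable (fun ω =>
      (G α - η * ⟪g, v + u⟫_ℝ + L * η ^ 2 / 2 * ‖v + u‖ ^ 2)
      + (-η) * ⟪g, φ ω⟫_ℝ + (L * η ^ 2) * ⟪v + u, φ ω⟫_ℝ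
      + (L * η ^ 2 / 2) * ‖φ ω‖ ^ 2) μ := hIab.add hI3
  have hmono := integral_mono hint hRHS key
  -- compute the integral of the RHS
  have hEg : ∫ ω, ⟪g, φ ω⟫_ℝ ∂μ = 0 := by
    rw [integral_inner hφ_int, hmean, inner_zero_right]
  have hEvu : ∫ ω, ⟪v + u, φ ω⟫_ℝ ∂μ = 0 := by
    rw [integral_inner hφ_int, hmean, inner_zero_right]
  have hsplit : ∫ ω, ((G α - η * ⟪g, v + u⟫_ℝ + L * η ^ 2 / 2 * ‖v + u‖ ^ 2)
      + (-η) * ⟪g, φ ω⟫_ℝ + (L * η ^ 2) * ⟪v + u, φ ω⟫_ℝ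
      + (L * η ^ 2 / 2) * ‖φ ω‖ ^ 2) ∂μ
      = (G α - η * ⟪g, v + u⟫_ℝ + L * η ^ 2 / 2 * ‖v + u‖ ^ 2)
        + (L * η ^ 2 / 2) * ∫ ω, ‖φ ω‖ ^ 2 ∂μ := by
    rw [integral_add hIab hI3, integral_add hIa hI2,
      integral_add hIC hI1, integral_const_mul, integral_const_mul, integral_const_mul,
      hEg, hEvu, integral_const]
    simp
  rw [hsplit] at hmono
  -- final estimates
  have hvu : ‖v + u‖ ≤ ρ + lam := (norm_add_le v u).trans (add_le_add hv hu)
  have hip : -⟪g, v + u⟫_ℝ ≤ ‖g‖ * ‖v + u‖ := by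
    have := abs_real_inner_le_norm g (v + u)
    rw [abs_le] at this
    linarith [this.1]
  have hEφ2nonneg : (0:ℝ) ≤ ∫ ω, ‖φ ω‖ ^ 2 ∂μ :=
    integral_nonneg fun ω => sq_nonneg _
  have h1 : -η * ⟪g, v + u⟫_ℝ ≤ η * (ρ + lam) * ‖g‖ := by
    have := mul_le_mul_of_nonneg_left hip hη
    have h2 : ‖g‖ * ‖v + u‖ ≤ ‖g‖ * (ρ + lam) :=
      mul_le_mul_of_nonneg_left hvu (norm_nonneg g)
    nlinarith
  have h2 : L * η ^ 2 / 2 * ‖v + u‖ ^ 2 + (L * η ^ 2 / 2) * ∫ ω, ‖φ ω‖ ^ 2 ∂μ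
      ≤ (L * η ^ 2 / 2) * ((ρ + lam) ^ 2 + σ ^ 2) := by
    have hc : (0:ℝ) ≤ L * η ^ 2 / 2 := by positivity
    have hsq : ‖v + u‖ ^ 2 ≤ (ρ + lam) ^ 2 := by
      nlinarith [norm_nonneg (v + u)]
    nlinarith [mul_le_mul_of_nonneg_left hvar hc, mul_le_mul_of_nonneg_left hsq hc]
  linarith
end

section
/- (Per-iteration expected bound for the validation loss, inequality (15) in the proof of Theorem 1). Let p, d, q ≥ 1 be integers, A = (ℝ^d)^p with blocks α_1, …, α_p ∈ ℝ^d, Θ = ℝ^q, both with Euclidean norms, and u(α) ∈ A the vector with blocks α_j/‖α_j‖₂ (defined when all blocks are nonzero). Let G, H : A × Θ → ℝ be differentiable and L-smooth (L > 0) with ‖∇_{α_j} H(α, θ)‖₂ ≤ ρ for every block j and every (α, θ). Fix λ ≥ 0, σ ≥ 0, η ≥ 0, ν ≥ 0, and a point (α, θ) ∈ A × Θ with all blocks α_j nonzero. On a probability space let φ be an A-valued square-integrable random vector with E[φ] = 0 and E[‖φ‖₂²] ≤ σ², set ᾱ' = α − η(∇_α H(α, θ) + φ + λ u(α)), let ξ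 be a Θ-valued square-integrable random vector with E[ξ | φ] = 0 and E[‖ξ‖₂² | φ] ≤ σ² almost surely, and set θ' = θ − ν(∇_θ G(ᾱ', θ) + ξ). Assume the relevant compositions are integrable. Then (ν − Lν²/2) E[‖∇_θ G(ᾱ', θ)‖₂²] ≤ G(α, θ) − E[G(ᾱ', θ')] + (Lν²/2)σ² + (ρ + λ) η Σ_{j=1}^{p} ‖∇_{α_j} G(α, θ)‖₂ + (Lη²/2)(p(ρ + λ)² + σ²). -/
open MeasureTheory

noncomputable section

/-- The grouped parameter space `A = (ℝ^d)^p`, realized as a Euclidean space indexed by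
pairs `(j, k)` with `j` the block index. -/
abbrev GroupedSpace (p d : ℕ) := EuclideanSpace ℝ (Fin p × Fin d)

/-- The `j`-th block `α_j ∈ ℝ^d` of `α ∈ (ℝ^d)^p`. -/
def blockOf {p d : ℕ} (α : GroupedSpace p d) (j : Fin p) : EuclideanSpace ℝ (Fin d) :=
  WithLp.toLp 2 (fun k => α (j, k))

/-- Replace the `j`-th block of `α` by `x`. -/
def updateBlock {p d : ℕ} (α : GroupedSpace p d) (j : Fin p) (x : EuclideanSpace ℝ (Fin d)) :
    GroupedSpace p d :=
  WithLp.toLp 2 (fun ik => if ik.1 = j then x ik.2 else α ik)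

/-- The blockwise-normalized vector `u(α)` with blocks `u(α)_j = α_j / ‖α_j‖₂`. -/
def unitBlocks {p d : ℕ} (α : GroupedSpace p d) : GroupedSpace p d :=
  WithLp.toLp 2 (fun ik => ‖blockOf α ik.1‖⁻¹ * α ik)

/-- Partial gradient `∇_α f(α, θ)` with respect to the whole first argument. -/
def gradAlpha {p d q : ℕ} (f : GroupedSpace p d → EuclideanSpace ℝ (Fin q) → ℝ)
    (α : GroupedSpace p d) (θ : EuclideanSpace ℝ (Fin q)) : GroupedSpace p d :=
  gradient (fun a => f a θ) α

/-- Partial gradient `∇_θ f(α, θ)` with respect to the second argument. -/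
def gradTheta {p d q : ℕ} (f : GroupedSpace p d → EuclideanSpace ℝ (Fin q) → ℝ)
    (α : GroupedSpace p d) (θ : EuclideanSpace ℝ (Fin q)) : EuclideanSpace ℝ (Fin q) :=
  gradient (fun t => f α t) θ

/-- Partial gradient `∇_{α_j} f(α, θ)` with respect to the `j`-th block of `α`. -/
def gradBlock {p d q : ℕ} (f : GroupedSpace p d → EuclideanSpace ℝ (Fin q) → ℝ) (j : Fin p)
    (α : GroupedSpace p d) (θ : EuclideanSpace ℝ (Fin q)) : EuclideanSpace ℝ (Fin d) :=
  gradient (fun x => f (updateBlock α j x) θ) (blockOf α j)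

/-- The function on the `ℓ²`-product space `A ×₂ Θ` associated to `f : A → Θ → ℝ`. -/
def jointFun {p d q : ℕ} (f : GroupedSpace p d → EuclideanSpace ℝ (Fin q) → ℝ) :
    WithLp 2 (GroupedSpace p d × EuclideanSpace ℝ (Fin q)) → ℝ :=
  fun y => f (WithLp.equiv 2 _ y).1 (WithLp.equiv 2 _ y).2

/-- `f : A → Θ → ℝ` is differentiable and `L`-smooth jointly in `(α, θ)`:
its gradient on the `ℓ²`-product space is `L`-Lipschitz. -/
def IsSmooth {p d q : ℕ} (L : ℝ) (f : GroupedSpace p d → EuclideanSpace ℝ (Fin q) → ℝ) : Prop :=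
  Differentiable ℝ (jointFun f) ∧
    ∀ x y, ‖gradient (jointFun f) x - gradient (jointFun f) y‖ ≤ L * ‖x - y‖

/-! ### Auxiliary lemmas -/

open intervalIntegral in
theorem PerIter.lipschitz_gradient_continuous {E : Type*} [NormedAddCommGroup E]
    [InnerProductSpace ℝ E] [CompleteSpace E]
    {f : E → ℝ} {L : ℝ} (hL : 0 ≤ L)
    (hlip : ∀ x y, ‖gradient f x - gradient f y‖ ≤ L * ‖x - y‖) :
    Continuous (fun x => gradient f x) := by
  have : LipschitzWith L.toNNReal (fun x => gradient f x) := by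
    apply LipschitzWith.of_dist_le_mul
    intro a b
    rw [dist_eq_norm, dist_eq_norm, Real.coe_toNNReal L hL]
    exact hlip a b
  exact this.continuous

open intervalIntegral in
theorem PerIter.descent_lemma {E : Type*} [NormedAddCommGroup E] [InnerProductSpace ℝ E]
    [CompleteSpace E]
    {f : E → ℝ} {L : ℝ} (hL : 0 ≤ L) (hf : Differentiable ℝ f)
    (hlip : ∀ x y, ‖gradient f x - gradient f y‖ ≤ L * ‖x - y‖) (x y : E) :
    f y ≤ f x + inner (𝕜 := ℝ) (gradient f x) (y - x) + L / 2 * ‖y - x‖ ^ 2 := by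
  set v := y - x with hv
  have hcurve : ∀ t : ℝ, HasDerivAt (fun s : ℝ => f (x + s • v))
      (inner (𝕜 := ℝ) (gradient f (x + t • v)) v) t := by
    intro t
    have h1 : HasDerivAt (fun s : ℝ => x + s • v) v t := by
      simpa using ((hasDerivAt_id t).smul_const v).const_add x
    have h2 := (hf (x + t • v)).hasGradientAt.hasFDerivAt
    have h3 := h2.comp_hasDerivAt t h1
    simpa [InnerProductSpace.toDual_apply_apply, Function.comp_def] using h3
  have hgcont : Continuous fun t : ℝ => inner (𝕜 := ℝ) (gradient f (x + t • v)) v := by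
    apply Continuous.inner
    · exact (PerIter.lipschitz_gradient_continuous hL hlip).comp (by continuity)
    · exact continuous_const
  have key : f y - f x = ∫ t in (0:ℝ)..1, inner (𝕜 := ℝ) (gradient f (x + t • v)) v := by
    have := intervalIntegral.integral_eq_sub_of_hasDerivAt
      (f := fun s : ℝ => f (x + s • v)) (fun t _ => hcurve t)
      (hgcont.intervalIntegrable 0 1)
    rw [this]
    simp [hv]
  have hbound : ∀ t ∈ Set.Icc (0:ℝ) 1,
      inner (𝕜 := ℝ) (gradient f (x + t • v)) v - inner (𝕜 := ℝ) (gradient f x) v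
        ≤ L * ‖v‖ ^ 2 * t := by
    intro t ht
    have h1 : inner (𝕜 := ℝ) (gradient f (x + t • v) - gradient f x) v
        ≤ ‖gradient f (x + t • v) - gradient f x‖ * ‖v‖ := real_inner_le_norm _ _
    have h2 : ‖gradient f (x + t • v) - gradient f x‖ ≤ L * (t * ‖v‖) := by
      have := hlip (x + t • v) x
      simpa [norm_smul, abs_of_nonneg ht.1] using this
    have h3 : ‖gradient f (x + t • v) - gradient f x‖ * ‖v‖ ≤ L * (t * ‖v‖) * ‖v‖ :=
      mul_le_mul_of_nonneg_right h2 (norm_nonneg v)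
    calc inner (𝕜 := ℝ) (gradient f (x + t • v)) v - inner (𝕜 := ℝ) (gradient f x) v
        = inner (𝕜 := ℝ) (gradient f (x + t • v) - gradient f x) v := by
          rw [inner_sub_left]
      _ ≤ L * (t * ‖v‖) * ‖v‖ := h1.trans h3
      _ = L * ‖v‖ ^ 2 * t := by ring
  have hint1 : IntervalIntegrable
      (fun t => inner (𝕜 := ℝ) (gradient f (x + t • v)) v - inner (𝕜 := ℝ) (gradient f x) v)
      MeasureTheory.volume 0 1 := (hgcont.sub continuous_const).intervalIntegrable 0 1
  have hint2 : IntervalIntegrable (fun t : ℝ => L * ‖v‖ ^ 2 * t) MeasureTheory.volume 0 1 :=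
    (continuous_const.mul continuous_id).intervalIntegrable 0 1
  have hmono := intervalIntegral.integral_mono_on (by norm_num : (0:ℝ) ≤ 1) hint1 hint2 hbound
  have hval : (∫ t in (0:ℝ)..1, L * ‖v‖ ^ 2 * t) = L / 2 * ‖v‖ ^ 2 := by
    rw [intervalIntegral.integral_const_mul, integral_id]
    ring
  have hsplit : (∫ t in (0:ℝ)..1,
      (inner (𝕜 := ℝ) (gradient f (x + t • v)) v - inner (𝕜 := ℝ) (gradient f x) v))
      = (∫ t in (0:ℝ)..1, inner (𝕜 := ℝ) (gradient f (x + t • v)) v)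
        - inner (𝕜 := ℝ) (gradient f x) v := by
    rw [intervalIntegral.integral_sub (hgcont.intervalIntegrable 0 1)
      (intervalIntegrable_const)]
    simp
  rw [hsplit, hval] at hmono
  linarith [key ▸ hmono]

namespace PerIter

variable {p d q : ℕ}

def toE {p d q : ℕ} (a : GroupedSpace p d) (t : EuclideanSpace ℝ (Fin q)) :
    WithLp 2 (GroupedSpace p d × EuclideanSpace ℝ (Fin q)) :=
  (WithLp.equiv 2 _).symm (a, t)

@[simp] lemma toE_fst (a : GroupedSpace p d) (t : EuclideanSpace ℝ (Fin q)) :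
    (toE a t).fst = a := rfl
@[simp] lemma toE_snd (a : GroupedSpace p d) (t : EuclideanSpace ℝ (Fin q)) :
    (toE a t).snd = t := rfl

lemma jointFun_toE (f : GroupedSpace p d → EuclideanSpace ℝ (Fin q) → ℝ)
    (a : GroupedSpace p d) (t : EuclideanSpace ℝ (Fin q)) : jointFun f (toE a t) = f a t := rfl

lemma toE_add (a a' : GroupedSpace p d) (t t' : EuclideanSpace ℝ (Fin q)) :
    toE a t + toE a' t' = toE (a + a') (t + t') := rfl

lemma toE_sub (a a' : GroupedSpace p d) (t t' : EuclideanSpace ℝ (Fin q)) :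
    toE a t - toE a' t' = toE (a - a') (t - t') := rfl

lemma norm_toE_sq (a : GroupedSpace p d) (t : EuclideanSpace ℝ (Fin q)) :
    ‖toE a t‖ ^ 2 = ‖a‖ ^ 2 + ‖t‖ ^ 2 :=
  WithLp.prod_norm_sq_eq_of_L2 (toE a t)

lemma norm_toE_left (a : GroupedSpace p d) :
    ‖toE a (0 : EuclideanSpace ℝ (Fin q))‖ = ‖a‖ := by
  have h := norm_toE_sq a (0 : EuclideanSpace ℝ (Fin q))
  simp only [norm_zero] at h
  rw [← Real.sqrt_sq (norm_nonneg (toE a (0 : EuclideanSpace ℝ (Fin q)))),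
    ← Real.sqrt_sq (norm_nonneg a)]
  rw [h]; norm_num

lemma norm_snd_le (z : WithLp 2 (GroupedSpace p d × EuclideanSpace ℝ (Fin q))) :
    ‖z.snd‖ ≤ ‖z‖ := by
  rw [← Real.sqrt_sq (norm_nonneg z.snd), ← Real.sqrt_sq (norm_nonneg z)]
  apply Real.sqrt_le_sqrt
  rw [WithLp.prod_norm_sq_eq_of_L2 z]
  nlinarith [sq_nonneg ‖z.fst‖]

def inclTheta (p d q : ℕ) :
    EuclideanSpace ℝ (Fin q) →L[ℝ] WithLp 2 (GroupedSpace p d × EuclideanSpace ℝ (Fin q)) :=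
  ((WithLp.prodContinuousLinearEquiv 2 ℝ (GroupedSpace p d)
    (EuclideanSpace ℝ (Fin q))).symm.toContinuousLinearMap).comp
    (ContinuousLinearMap.inr ℝ (GroupedSpace p d) (EuclideanSpace ℝ (Fin q)))

def inclAlpha (p d q : ℕ) :
    GroupedSpace p d →L[ℝ] WithLp 2 (GroupedSpace p d × EuclideanSpace ℝ (Fin q)) :=
  ((WithLp.prodContinuousLinearEquiv 2 ℝ (GroupedSpace p d)
    (EuclideanSpace ℝ (Fin q))).symm.toContinuousLinearMap).comp
    (ContinuousLinearMap.inl ℝ (GroupedSpace p d) (EuclideanSpace ℝ (Fin q)))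

@[simp] lemma inclTheta_apply (t : EuclideanSpace ℝ (Fin q)) :
    (inclTheta p d q t) = toE 0 t := by
  simp [inclTheta, toE]

@[simp] lemma inclAlpha_apply (a : GroupedSpace p d) :
    (inclAlpha p d q a) = toE a 0 := by
  simp [inclAlpha, toE]

lemma fderiv_joint_apply {f : GroupedSpace p d → EuclideanSpace ℝ (Fin q) → ℝ}
    (hf : Differentiable ℝ (jointFun f))
    (x w : WithLp 2 (GroupedSpace p d × EuclideanSpace ℝ (Fin q))) :
    fderiv ℝ (jointFun f) x w = inner (𝕜 := ℝ) (gradient (jointFun f) x) w := by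
  have h := (InnerProductSpace.toDual ℝ _).apply_symm_apply (fderiv ℝ (jointFun f) x)
  rw [← h]
  rfl

lemma hasFDerivAt_toE_theta (a : GroupedSpace p d) (t : EuclideanSpace ℝ (Fin q)) :
    HasFDerivAt (fun s => toE a s) (inclTheta p d q) t := by
  have heq : (fun s => toE a s) = fun s => toE a 0 + inclTheta p d q s := by
    funext s
    rw [inclTheta_apply, toE_add, add_zero, zero_add]
  rw [heq]
  exact ((inclTheta p d q).hasFDerivAt).const_add _

lemma hasFDerivAt_toE_alpha (a : GroupedSpace p d) (t : EuclideanSpace ℝ (Fin q)) :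
    HasFDerivAt (fun s => toE s t) (inclAlpha p d q) a := by
  have heq : (fun s => toE s t) = fun s => toE 0 t + inclAlpha p d q s := by
    funext s
    rw [inclAlpha_apply, toE_add, add_zero, zero_add]
  rw [heq]
  exact ((inclAlpha p d q).hasFDerivAt).const_add _

lemma differentiable_slice_alpha {f : GroupedSpace p d → EuclideanSpace ℝ (Fin q) → ℝ}
    (hf : Differentiable ℝ (jointFun f)) (t : EuclideanSpace ℝ (Fin q)) :
    Differentiable ℝ (fun a => f a t) := fun a => by
  have h := ((hf (toE a t)).hasFDerivAt).comp a (hasFDerivAt_toE_alpha a t)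
  exact h.differentiableAt

lemma gradTheta_eq {f : GroupedSpace p d → EuclideanSpace ℝ (Fin q) → ℝ}
    (hf : Differentiable ℝ (jointFun f)) (a : GroupedSpace p d) (t : EuclideanSpace ℝ (Fin q)) :
    gradTheta f a t = (gradient (jointFun f) (toE a t)).snd := by
  have hslice : HasFDerivAt (fun s => f a s)
      ((fderiv ℝ (jointFun f) (toE a t)).comp (inclTheta p d q)) t :=
    ((hf (toE a t)).hasFDerivAt).comp t (hasFDerivAt_toE_theta a t)
  have hgrad : HasGradientAt (fun s => f a s) ((gradient (jointFun f) (toE a t)).snd) t := by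
    rw [hasGradientAt_iff_hasFDerivAt]
    refine hslice.congr_fderiv ?_
    ext w
    simp only [ContinuousLinearMap.coe_comp', Function.comp_apply]
    rw [fderiv_joint_apply hf, inclTheta_apply, WithLp.prod_inner_apply]
    simp [InnerProductSpace.toDual_apply_apply]
  exact hgrad.gradient

lemma gradAlpha_eq {f : GroupedSpace p d → EuclideanSpace ℝ (Fin q) → ℝ}
    (hf : Differentiable ℝ (jointFun f)) (a : GroupedSpace p d) (t : EuclideanSpace ℝ (Fin q)) :
    gradAlpha f a t = (gradient (jointFun f) (toE a t)).fst := by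
  have hslice : HasFDerivAt (fun s => f s t)
      ((fderiv ℝ (jointFun f) (toE a t)).comp (inclAlpha p d q)) a := by
    have h := ((hf (toE a t)).hasFDerivAt).comp a (hasFDerivAt_toE_alpha a t)
    exact h
  have hgrad : HasGradientAt (fun s => f s t) ((gradient (jointFun f) (toE a t)).fst) a := by
    rw [hasGradientAt_iff_hasFDerivAt]
    refine hslice.congr_fderiv ?_
    ext w
    simp only [ContinuousLinearMap.coe_comp', Function.comp_apply]
    rw [fderiv_joint_apply hf, inclAlpha_apply, WithLp.prod_inner_apply]
    simp [InnerProductSpace.toDual_apply_apply]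
  exact hgrad.gradient

lemma inner_blocks (a b : GroupedSpace p d) :
    inner (𝕜 := ℝ) a b = ∑ j : Fin p, inner (𝕜 := ℝ) (blockOf a j) (blockOf b j) := by
  simp only [PiLp.inner_apply, RCLike.inner_apply, conj_trivial, blockOf, PiLp.toLp_apply]
  rw [Fintype.sum_prod_type]

lemma norm_sq_blocks (a : GroupedSpace p d) :
    ‖a‖ ^ 2 = ∑ j : Fin p, ‖blockOf a j‖ ^ 2 := by
  have h := inner_blocks a a
  rw [real_inner_self_eq_norm_sq] at h
  rw [h]
  congr 1
  funext j
  rw [real_inner_self_eq_norm_sq]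

lemma blockOf_unitBlocks (α : GroupedSpace p d) (j : Fin p) :
    blockOf (unitBlocks α) j = ‖blockOf α j‖⁻¹ • blockOf α j := rfl

lemma norm_blockOf_unitBlocks (α : GroupedSpace p d) (j : Fin p) (h : blockOf α j ≠ 0) :
    ‖blockOf (unitBlocks α) j‖ = 1 := by
  rw [blockOf_unitBlocks, norm_smul, norm_inv, norm_norm,
    inv_mul_cancel₀ (norm_ne_zero_iff.mpr h)]

lemma blockOf_add (a b : GroupedSpace p d) (j : Fin p) :
    blockOf (a + b) j = blockOf a j + blockOf b j := rfl
lemma blockOf_smul (c : ℝ) (a : GroupedSpace p d) (j : Fin p) :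
    blockOf (c • a) j = c • blockOf a j := rfl

def blockIncl (p d : ℕ) (j : Fin p) : EuclideanSpace ℝ (Fin d) →L[ℝ] GroupedSpace p d :=
  LinearMap.toContinuousLinearMap
    { toFun := fun x => (WithLp.toLp 2 (fun ik : Fin p × Fin d => if ik.1 = j then x ik.2 else 0) : GroupedSpace p d)
      map_add' := by
        intro x y; ext ik; by_cases h : ik.1 = j <;>
          simp [h, PiLp.add_apply]
      map_smul' := by
        intro c x; ext ik; by_cases h : ik.1 = j <;>
          simp [h, PiLp.smul_apply, smul_eq_mul] }

lemma blockIncl_apply (j : Fin p) (x : EuclideanSpace ℝ (Fin d)) (ik : Fin p × Fin d) :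
    blockIncl p d j x ik = if ik.1 = j then x ik.2 else 0 := rfl

lemma updateBlock_blockOf (α : GroupedSpace p d) (j : Fin p) :
    updateBlock α j (blockOf α j) = α := by
  ext ik
  simp only [updateBlock, blockOf, PiLp.toLp_apply]
  by_cases h : ik.1 = j
  · rw [h.symm]; simp
  · rw [if_neg h]

lemma updateBlock_eq_add (α : GroupedSpace p d) (j : Fin p) (x : EuclideanSpace ℝ (Fin d)) :
    updateBlock α j x = updateBlock α j 0 + blockIncl p d j x := by
  ext ik
  simp only [updateBlock, PiLp.add_apply, blockIncl_apply, PiLp.toLp_apply]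
  by_cases h : ik.1 = j <;> simp [h]

lemma gradBlock_eq {f : GroupedSpace p d → EuclideanSpace ℝ (Fin q) → ℝ}
    {θ : EuclideanSpace ℝ (Fin q)} (hf : Differentiable ℝ (fun a => f a θ))
    (α : GroupedSpace p d) (j : Fin p) :
    gradBlock f j α θ = blockOf (gradAlpha f α θ) j := by
  have hmain : HasFDerivAt (fun s => f s θ)
      (InnerProductSpace.toDual ℝ _ (gradAlpha f α θ)) α :=
    (hf α).hasGradientAt.hasFDerivAt
  have hJ : HasFDerivAt (fun x => updateBlock α j x) (blockIncl p d j) (blockOf α j) := by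
    have heq : (fun x => updateBlock α j x) = fun x => updateBlock α j 0 + blockIncl p d j x := by
      funext x; exact updateBlock_eq_add α j x
    rw [heq]
    exact ((blockIncl p d j).hasFDerivAt).const_add _
  have hmain' : HasFDerivAt (fun s => f s θ)
      (InnerProductSpace.toDual ℝ _ (gradAlpha f α θ)) (updateBlock α j (blockOf α j)) := by
    rw [updateBlock_blockOf]; exact hmain
  have hcomp : HasFDerivAt (fun x => f (updateBlock α j x) θ)
      ((InnerProductSpace.toDual ℝ _ (gradAlpha f α θ)).comp (blockIncl p d j)) (blockOf α j) :=
    hmain'.comp (blockOf α j) hJ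
  have hgrad : HasGradientAt (fun x => f (updateBlock α j x) θ)
      (blockOf (gradAlpha f α θ) j) (blockOf α j) := by
    rw [hasGradientAt_iff_hasFDerivAt]
    refine hcomp.congr_fderiv ?_
    ext w
    simp only [ContinuousLinearMap.coe_comp', Function.comp_apply,
      InnerProductSpace.toDual_apply_apply]
    simp only [PiLp.inner_apply, RCLike.inner_apply, conj_trivial, blockOf,
      Fintype.sum_prod_type, blockIncl_apply, PiLp.toLp_apply]
    simp [mul_ite, Finset.sum_ite_eq']
  exact hgrad.gradient

section Probability

variable {Ω : Type*} {m m0 : MeasurableSpace Ω} {μ : @MeasureTheory.Measure Ω m0}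

lemma mul_integrable_of_memL2 {f g : Ω → ℝ} (hf : MemLp f 2 μ) (hg : MemLp g 2 μ) :
    Integrable (fun ω => f ω * g ω) μ := by
  have hmeas : AEStronglyMeasurable (fun ω => f ω * g ω) μ := hf.1.mul hg.1
  have hint : Integrable (fun ω => (f ω ^ 2 + g ω ^ 2) / 2) μ :=
    (hf.integrable_sq.add hg.integrable_sq).div_const 2
  refine hint.mono' hmeas ?_
  filter_upwards with ω
  rw [Real.norm_eq_abs, abs_mul]
  nlinarith [sq_abs (f ω), sq_abs (g ω), sq_nonneg (|f ω| - |g ω|)]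

lemma coord_abs_le {n : ℕ} (x : EuclideanSpace ℝ (Fin n)) (i : Fin n) : |x i| ≤ ‖x‖ := by
  rw [EuclideanSpace.norm_eq, ← Real.sqrt_sq_eq_abs]
  apply Real.sqrt_le_sqrt
  have : x i ^ 2 ≤ ∑ j, ‖x j‖ ^ 2 := by
    have := Finset.single_le_sum (f := fun j => ‖x j‖ ^ 2)
      (fun j _ => sq_nonneg _) (Finset.mem_univ i)
    simpa [Real.norm_eq_abs, sq_abs] using this
  simpa using this

lemma memL2_coord {n : ℕ} {ξ : Ω → EuclideanSpace ℝ (Fin n)} (hξ : MemLp ξ 2 μ) (i : Fin n) :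
    MemLp (fun ω => ξ ω i) 2 μ := by
  refine hξ.norm.of_le ?_ ?_
  · exact ((EuclideanSpace.proj (𝕜 := ℝ) i).continuous.comp_aestronglyMeasurable hξ.1)
  · filter_upwards with ω
    simpa [Real.norm_eq_abs] using coord_abs_le (ξ ω) i

lemma condexp_coord_zero {n : ℕ} (hm : m ≤ m0) [IsProbabilityMeasure μ]
    {ξ : Ω → EuclideanSpace ℝ (Fin n)} (hξ1 : Integrable ξ μ)
    (hmean : μ[ξ|m] =ᵐ[μ] 0) (i : Fin n) :
    μ[fun ω => ξ ω i|m] =ᵐ[μ] 0 := by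
  haveI : IsFiniteMeasure (μ.trim hm) := isFiniteMeasure_trim hm
  have h := ae_eq_condExp_of_forall_setIntegral_eq hm
    (f := fun ω => ξ ω i) (g := fun _ => (0 : ℝ))
    ((EuclideanSpace.proj (𝕜 := ℝ) i).integrable_comp hξ1)
    (fun s _ _ => (integrableOn_zero (s := s)))
    ?_ (StronglyMeasurable.aestronglyMeasurable stronglyMeasurable_const)
  · exact h.symm
  · intro s hs hμs
    have h1 : ∫ ω in s, ξ ω i ∂μ = (EuclideanSpace.proj (𝕜 := ℝ) i) (∫ ω in s, ξ ω ∂μ) :=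
      (EuclideanSpace.proj (𝕜 := ℝ) i).integral_comp_comm hξ1.integrableOn
    have h2 : ∫ ω in s, ξ ω ∂μ = 0 := by
      rw [← setIntegral_condExp hm hξ1 hs]
      rw [setIntegral_congr_ae (hm s hs) (hmean.mono fun ω hω _ => hω)]
      simp
    simp [h1, h2]

lemma integral_inner_zero {n : ℕ} (hm : m ≤ m0) [IsProbabilityMeasure μ]
    {g ξ : Ω → EuclideanSpace ℝ (Fin n)}
    (hgm : StronglyMeasurable[m] g) (hg2 : MemLp g 2 μ) (hξ2 : MemLp ξ 2 μ)
    (hmean : μ[ξ|m] =ᵐ[μ] 0) :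
    Integrable (fun ω => inner (𝕜 := ℝ) (g ω) (ξ ω)) μ ∧
      ∫ ω, inner (𝕜 := ℝ) (g ω) (ξ ω) ∂μ = 0 := by
  haveI : IsFiniteMeasure (μ.trim hm) := isFiniteMeasure_trim hm
  have hprod : ∀ i : Fin n, Integrable (fun ω => g ω i * ξ ω i) μ := fun i =>
    mul_integrable_of_memL2 (memL2_coord hg2 i) (memL2_coord hξ2 i)
  have hinner_eq : (fun ω => inner (𝕜 := ℝ) (g ω) (ξ ω)) =
      fun ω => ∑ i : Fin n, g ω i * ξ ω i := by
    funext ω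
    simp [PiLp.inner_apply, RCLike.inner_apply, conj_trivial, mul_comm]
  constructor
  · rw [hinner_eq]
    exact integrable_finset_sum _ (fun i _ => hprod i)
  · rw [hinner_eq, integral_finset_sum _ (fun i _ => hprod i)]
    refine Finset.sum_eq_zero fun i _ => ?_
    have hgi : StronglyMeasurable[m] (fun ω => g ω i) :=
      (EuclideanSpace.proj (𝕜 := ℝ) i).continuous.comp_stronglyMeasurable hgm
    have hpull := condExp_mul_of_stronglyMeasurable_left (μ := μ) hgi (hprod i)
      ((memL2_coord hξ2 i).integrable one_le_two)
    have hz := condexp_coord_zero hm (hξ2.integrable one_le_two) hmean i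
    have hzero : μ[(fun ω => g ω i) * fun ω => ξ ω i|m] =ᵐ[μ] 0 := by
      refine hpull.trans ?_
      filter_upwards [hz] with ω hω
      simp [hω]
    calc ∫ ω, g ω i * ξ ω i ∂μ
        = ∫ ω, (μ[(fun ω => g ω i) * fun ω => ξ ω i|m]) ω ∂μ := (integral_condExp hm).symm
      _ = 0 := by rw [integral_congr_ae hzero]; simp

lemma integral_norm_sq_le_of_condexp {E : Type*} [NormedAddCommGroup E]
    (hm : m ≤ m0) [IsProbabilityMeasure μ] {ξ : Ω → E} (hξ2 : MemLp ξ 2 μ) {σ : ℝ}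
    (hvar : μ[(fun ω => ‖ξ ω‖ ^ 2)|m] ≤ᵐ[μ] fun _ => σ ^ 2) :
    ∫ ω, ‖ξ ω‖ ^ 2 ∂μ ≤ σ ^ 2 := by
  haveI : IsFiniteMeasure (μ.trim hm) := isFiniteMeasure_trim hm
  have hint : Integrable (fun ω => ‖ξ ω‖ ^ 2) μ :=
    (memLp_two_iff_integrable_sq_norm hξ2.1).mp hξ2
  calc ∫ ω, ‖ξ ω‖ ^ 2 ∂μ = ∫ ω, (μ[(fun ω => ‖ξ ω‖ ^ 2)|m]) ω ∂μ := (integral_condExp hm).symm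
    _ ≤ ∫ _ω, σ ^ 2 ∂μ := integral_mono_ae integrable_condExp (integrable_const _) hvar
    _ = σ ^ 2 := by simp

end Probability

end PerIter

set_option maxHeartbeats 1000000 in
/-- **Per-iteration expected bound for the validation loss** (inequality (15) in the proof of
Theorem 1 of "Generalized Sparse Additive Model with Unknown Link Function"). -/
theorem per_iteration_validation_bound
    {p d q : ℕ} (hp : 1 ≤ p) (hd : 1 ≤ d) (hq : 1 ≤ q)
    (G H : GroupedSpace p d → EuclideanSpace ℝ (Fin q) → ℝ)
    {L ρ lam σ η ν : ℝ} (hL : 0 < L)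
    (hGsmooth : IsSmooth L G) (hHsmooth : IsSmooth L H)
    (hHρ : ∀ (j : Fin p) (a : GroupedSpace p d) (t : EuclideanSpace ℝ (Fin q)),
      ‖gradBlock H j a t‖ ≤ ρ)
    (hlam : 0 ≤ lam) (hσ : 0 ≤ σ) (hη : 0 ≤ η) (hν : 0 ≤ ν)
    (α : GroupedSpace p d) (θ : EuclideanSpace ℝ (Fin q))
    (hblocks : ∀ j : Fin p, blockOf α j ≠ 0)
    {Ω : Type*} [MeasurableSpace Ω] (μ : Measure Ω) [IsProbabilityMeasure μ]
    (φ : Ω → GroupedSpace p d) (hφmeas : Measurable φ) (hφ2 : MemLp φ 2 μ)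
    (hφmean : ∫ ω, φ ω ∂μ = 0) (hφvar : ∫ ω, ‖φ ω‖ ^ 2 ∂μ ≤ σ ^ 2)
    (ᾱ' : Ω → GroupedSpace p d)
    (hᾱ' : ∀ ω, ᾱ' ω = α - η • (gradAlpha H α θ + φ ω + lam • unitBlocks α))
    (ξ : Ω → EuclideanSpace ℝ (Fin q)) (hξmeas : Measurable ξ) (hξ2 : MemLp ξ 2 μ)
    (hξmean : μ[ξ | MeasurableSpace.comap φ inferInstance] =ᵐ[μ] 0)
    (hξvar : μ[(fun ω => ‖ξ ω‖ ^ 2) | MeasurableSpace.comap φ inferInstance]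
      ≤ᵐ[μ] (fun _ => σ ^ 2))
    (θ' : Ω → EuclideanSpace ℝ (Fin q))
    (hθ' : ∀ ω, θ' ω = θ - ν • (gradTheta G (ᾱ' ω) θ + ξ ω))
    (hint1 : Integrable (fun ω => G (ᾱ' ω) (θ' ω)) μ)
    (hint2 : Integrable (fun ω => ‖gradTheta G (ᾱ' ω) θ‖ ^ 2) μ) :
    (ν - L * ν ^ 2 / 2) * ∫ ω, ‖gradTheta G (ᾱ' ω) θ‖ ^ 2 ∂μ ≤
      G α θ - (∫ ω, G (ᾱ' ω) (θ' ω) ∂μ) + (L * ν ^ 2 / 2) * σ ^ 2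
        + (ρ + lam) * η * ∑ j : Fin p, ‖gradBlock G j α θ‖
        + (L * η ^ 2 / 2) * (p * (ρ + lam) ^ 2 + σ ^ 2) := by
  obtain ⟨hGdiff, hGlip⟩ := hGsmooth
  have hL0 : (0:ℝ) ≤ L := hL.le
  have hρ0 : 0 ≤ ρ := le_trans (norm_nonneg _) (hHρ ⟨0, hp⟩ α θ)
  have hrhol : 0 ≤ ρ + lam := by linarith
  set c : GroupedSpace p d := gradAlpha H α θ + lam • unitBlocks α with hcdef
  have hᾱ'' : ∀ ω, ᾱ' ω = α - η • (c + φ ω) := by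
    intro ω
    rw [hᾱ' ω]
    congr 1
    congr 1
    rw [hcdef]
    abel
  have hHslice : Differentiable ℝ (fun a => H a θ) :=
    PerIter.differentiable_slice_alpha hHsmooth.1 θ
  have hGslice : Differentiable ℝ (fun a => G a θ) :=
    PerIter.differentiable_slice_alpha hGdiff θ
  have hcj : ∀ j : Fin p, ‖blockOf c j‖ ≤ ρ + lam := by
    intro j
    rw [hcdef, PerIter.blockOf_add, PerIter.blockOf_smul]
    refine (norm_add_le _ _).trans ?_
    have h1 : ‖blockOf (gradAlpha H α θ) j‖ ≤ ρ := by
      rw [← PerIter.gradBlock_eq hHslice α j]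
      exact hHρ j α θ
    have h2 : ‖lam • blockOf (unitBlocks α) j‖ = lam := by
      rw [norm_smul, PerIter.norm_blockOf_unitBlocks α j (hblocks j),
        Real.norm_eq_abs, abs_of_nonneg hlam, mul_one]
    rw [h2]
    linarith
  have hcsq : ‖c‖ ^ 2 ≤ p * (ρ + lam) ^ 2 := by
    rw [PerIter.norm_sq_blocks]
    calc ∑ j : Fin p, ‖blockOf c j‖ ^ 2 ≤ ∑ _j : Fin p, (ρ + lam) ^ 2 :=
        Finset.sum_le_sum fun j _ => pow_le_pow_left₀ (norm_nonneg _) (hcj j) 2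
      _ = p * (ρ + lam) ^ 2 := by
        simp [Finset.sum_const, nsmul_eq_mul]
  have hAc : -(inner (𝕜 := ℝ) (gradAlpha G α θ) c)
      ≤ (ρ + lam) * ∑ j : Fin p, ‖gradBlock G j α θ‖ := by
    rw [PerIter.inner_blocks, ← Finset.sum_neg_distrib, Finset.mul_sum]
    refine Finset.sum_le_sum fun j _ => ?_
    rw [PerIter.gradBlock_eq hGslice α j]
    calc -(inner (𝕜 := ℝ) (blockOf (gradAlpha G α θ) j) (blockOf c j))
        ≤ |inner (𝕜 := ℝ) (blockOf (gradAlpha G α θ) j) (blockOf c j)| := neg_le_abs _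
      _ ≤ ‖blockOf (gradAlpha G α θ) j‖ * ‖blockOf c j‖ := abs_real_inner_le_norm _ _
      _ ≤ ‖blockOf (gradAlpha G α θ) j‖ * (ρ + lam) :=
          mul_le_mul_of_nonneg_left (hcj j) (norm_nonneg _)
      _ = (ρ + lam) * ‖blockOf (gradAlpha G α θ) j‖ := mul_comm _ _
  -- φ facts
  have hφint : Integrable φ μ := hφ2.integrable one_le_two
  have hφinner0 : ∀ v : GroupedSpace p d, ∫ ω, inner (𝕜 := ℝ) v (φ ω) ∂μ = 0 := by
    intro v
    have h := (innerSL ℝ v).integral_comp_comm hφint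
    simp only [innerSL_apply_apply] at h
    rw [h, hφmean, inner_zero_right]
  have hφinnerI : ∀ v : GroupedSpace p d, Integrable (fun ω => inner (𝕜 := ℝ) v (φ ω)) μ := by
    intro v
    have h := (innerSL ℝ v).integrable_comp hφint
    simpa using h
  have hφsq : Integrable (fun ω => ‖φ ω‖ ^ 2) μ := (memLp_two_iff_integrable_sq_norm hφ2.1).mp hφ2
  -- measurability of the stochastic gradient
  have hm : MeasurableSpace.comap φ inferInstance ≤ (inferInstance : MeasurableSpace Ω) :=
    measurable_iff_comap_le.mp hφmeas
  have hGradcont : Continuous (fun x => gradient (jointFun G) x) :=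
    PerIter.lipschitz_gradient_continuous hL0 hGlip
  have hsndcont : Continuous
      (fun z : WithLp 2 (GroupedSpace p d × EuclideanSpace ℝ (Fin q)) => z.snd) := by
    have h := (WithLp.prodContinuousLinearEquiv 2 ℝ (GroupedSpace p d)
      (EuclideanSpace ℝ (Fin q))).continuous
    exact continuous_snd.comp h
  have htoEcont : Continuous (fun a : GroupedSpace p d => PerIter.toE (q := q) a θ) := by
    have heq : (fun a : GroupedSpace p d => PerIter.toE a θ)
        = fun a => PerIter.toE 0 θ + PerIter.inclAlpha p d q a := by
      funext a
      rw [PerIter.inclAlpha_apply, PerIter.toE_add, add_zero, zero_add]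
    rw [heq]
    exact continuous_const.add (PerIter.inclAlpha p d q).continuous
  have hgθcont : Continuous (fun a : GroupedSpace p d => gradTheta G a θ) := by
    have heq : (fun a : GroupedSpace p d => gradTheta G a θ)
        = fun a => (gradient (jointFun G) (PerIter.toE a θ)).snd := by
      funext a
      exact PerIter.gradTheta_eq hGdiff a θ
    rw [heq]
    exact hsndcont.comp (hGradcont.comp htoEcont)
  have hFcont : Continuous (fun v : GroupedSpace p d => α - η • (c + v)) :=
    continuous_const.sub ((continuous_const.add continuous_id).const_smul η)
  have hgdef : (fun ω => gradTheta G (ᾱ' ω) θ)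
      = (fun v => gradTheta G (α - η • (c + v)) θ) ∘ φ := by
    funext ω
    simp only [Function.comp_apply]
    rw [hᾱ'' ω]
  have hφm : Measurable[MeasurableSpace.comap φ inferInstance] φ :=
    measurable_iff_comap_le.mpr le_rfl
  have hgmeasm : StronglyMeasurable[MeasurableSpace.comap φ inferInstance]
      (fun ω => gradTheta G (ᾱ' ω) θ) := by
    rw [hgdef]
    exact (((hgθcont.comp hFcont).measurable.comp hφm).stronglyMeasurable)
  have hgmeas : AEStronglyMeasurable (fun ω => gradTheta G (ᾱ' ω) θ) μ := by
    rw [hgdef]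
    exact (((hgθcont.comp hFcont).measurable.comp hφmeas).stronglyMeasurable).aestronglyMeasurable
  have hgbound : ∀ ω, ‖gradTheta G (ᾱ' ω) θ‖
      ≤ (‖gradTheta G α θ‖ + L * η * ‖c‖) + L * η * ‖φ ω‖ := by
    intro ω
    have h1 : gradTheta G (ᾱ' ω) θ - gradTheta G α θ
        = (gradient (jointFun G) (PerIter.toE (ᾱ' ω) θ)
            - gradient (jointFun G) (PerIter.toE α θ)).snd := by
      rw [PerIter.gradTheta_eq hGdiff, PerIter.gradTheta_eq hGdiff]
      rfl
    have h2 : ‖gradTheta G (ᾱ' ω) θ - gradTheta G α θ‖ ≤ L * ‖ᾱ' ω - α‖ := by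
      rw [h1]
      refine (PerIter.norm_snd_le _).trans ?_
      have h := hGlip (PerIter.toE (ᾱ' ω) θ) (PerIter.toE α θ)
      rwa [PerIter.toE_sub, sub_self, PerIter.norm_toE_left] at h
    have h3 : ‖ᾱ' ω - α‖ ≤ η * (‖c‖ + ‖φ ω‖) := by
      rw [hᾱ'' ω]
      have he : α - η • (c + φ ω) - α = -(η • (c + φ ω)) := by abel
      rw [he, norm_neg, norm_smul, Real.norm_eq_abs, abs_of_nonneg hη]
      exact mul_le_mul_of_nonneg_left (norm_add_le _ _) hη
    have h4 := norm_sub_norm_le (gradTheta G (ᾱ' ω) θ) (gradTheta G α θ)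
    nlinarith [mul_le_mul_of_nonneg_left h3 hL0]
  have hgmem : MemLp (fun ω => gradTheta G (ᾱ' ω) θ) 2 μ := by
    have hmaj : MemLp (fun ω => (‖gradTheta G α θ‖ + L * η * ‖c‖) + L * η * ‖φ ω‖) 2 μ :=
      MemLp.add (f := fun _ : Ω => ‖gradTheta G α θ‖ + L * η * ‖c‖) (g := fun ω => L * η * ‖φ ω‖) (memLp_const _) (hφ2.norm.const_mul (L * η))
    refine hmaj.of_le hgmeas ?_
    filter_upwards with ω
    rw [Real.norm_eq_abs, abs_of_nonneg (by positivity)]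
    exact hgbound ω
  -- ξ facts
  have hξsqle : ∫ ω, ‖ξ ω‖ ^ 2 ∂μ ≤ σ ^ 2 :=
    PerIter.integral_norm_sq_le_of_condexp hm hξ2 hξvar
  obtain ⟨hgξI, hgξ0⟩ := PerIter.integral_inner_zero hm hgmeasm hgmem hξ2 hξmean
  have hξsq : Integrable (fun ω => ‖ξ ω‖ ^ 2) μ := (memLp_two_iff_integrable_sq_norm hξ2.1).mp hξ2
  -- pointwise bound
  have hpt : ∀ ω, G (ᾱ' ω) (θ' ω) ≤
      (G α θ + (-η) * inner (𝕜 := ℝ) (gradAlpha G α θ) c + L * η ^ 2 / 2 * ‖c‖ ^ 2)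
      + ((-η) * inner (𝕜 := ℝ) (gradAlpha G α θ) (φ ω)
        + (L * η ^ 2) * inner (𝕜 := ℝ) c (φ ω)
        + (L * η ^ 2 / 2) * ‖φ ω‖ ^ 2
        + (-(ν - L * ν ^ 2 / 2)) * ‖gradTheta G (ᾱ' ω) θ‖ ^ 2
        + (L * ν ^ 2 - ν) * inner (𝕜 := ℝ) (gradTheta G (ᾱ' ω) θ) (ξ ω)
        + (L * ν ^ 2 / 2) * ‖ξ ω‖ ^ 2) := by
    intro ω
    have dA := PerIter.descent_lemma hL0 hGdiff hGlip
      (PerIter.toE (ᾱ' ω) θ) (PerIter.toE (ᾱ' ω) (θ' ω))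
    simp only [PerIter.jointFun_toE] at dA
    rw [PerIter.toE_sub, sub_self] at dA
    have hw : θ' ω - θ = -(ν • (gradTheta G (ᾱ' ω) θ + ξ ω)) := by
      rw [hθ' ω]
      exact sub_sub_cancel_left _ _
    have hinnerA : inner (𝕜 := ℝ) (gradient (jointFun G) (PerIter.toE (ᾱ' ω) θ))
        (PerIter.toE 0 (θ' ω - θ)) = inner (𝕜 := ℝ) (gradTheta G (ᾱ' ω) θ) (θ' ω - θ) := by
      rw [WithLp.prod_inner_apply, WithLp.ofLp_fst, WithLp.ofLp_snd, WithLp.ofLp_fst,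
        WithLp.ofLp_snd, PerIter.toE_fst, PerIter.toE_snd, inner_zero_right,
        zero_add, ← PerIter.gradTheta_eq hGdiff]
    have hnormA : ‖PerIter.toE (0 : GroupedSpace p d) (θ' ω - θ)‖ ^ 2 = ‖θ' ω - θ‖ ^ 2 := by
      rw [PerIter.norm_toE_sq]
      simp
    rw [hinnerA, hnormA] at dA
    have hexp1 : inner (𝕜 := ℝ) (gradTheta G (ᾱ' ω) θ) (θ' ω - θ)
        = -ν * (‖gradTheta G (ᾱ' ω) θ‖ ^ 2
            + inner (𝕜 := ℝ) (gradTheta G (ᾱ' ω) θ) (ξ ω)) := by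
      rw [hw, inner_neg_right, real_inner_smul_right, inner_add_right,
        real_inner_self_eq_norm_sq]
      ring
    have hexp2 : ‖θ' ω - θ‖ ^ 2 = ν ^ 2 * (‖gradTheta G (ᾱ' ω) θ‖ ^ 2
        + 2 * inner (𝕜 := ℝ) (gradTheta G (ᾱ' ω) θ) (ξ ω) + ‖ξ ω‖ ^ 2) := by
      rw [hw, norm_neg, norm_smul, Real.norm_eq_abs, mul_pow, sq_abs, norm_add_sq_real]
    rw [hexp1, hexp2] at dA
    have dB := PerIter.descent_lemma hL0 hGdiff hGlip
      (PerIter.toE α θ) (PerIter.toE (ᾱ' ω) θ)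
    simp only [PerIter.jointFun_toE] at dB
    rw [PerIter.toE_sub, sub_self] at dB
    have hv : ᾱ' ω - α = -(η • (c + φ ω)) := by
      rw [hᾱ'' ω]
      exact sub_sub_cancel_left _ _
    have hinnerB : inner (𝕜 := ℝ) (gradient (jointFun G) (PerIter.toE α θ))
        (PerIter.toE (ᾱ' ω - α) 0) = inner (𝕜 := ℝ) (gradAlpha G α θ) (ᾱ' ω - α) := by
      rw [WithLp.prod_inner_apply, WithLp.ofLp_fst, WithLp.ofLp_snd, WithLp.ofLp_fst,
        WithLp.ofLp_snd, PerIter.toE_fst, PerIter.toE_snd, inner_zero_right,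
        add_zero, ← PerIter.gradAlpha_eq hGdiff]
    have hnormB : ‖PerIter.toE (ᾱ' ω - α) (0 : EuclideanSpace ℝ (Fin q))‖ ^ 2
        = ‖ᾱ' ω - α‖ ^ 2 := by
      rw [PerIter.norm_toE_sq]
      simp
    rw [hinnerB, hnormB] at dB
    have hexp3 : inner (𝕜 := ℝ) (gradAlpha G α θ) (ᾱ' ω - α)
        = -η * (inner (𝕜 := ℝ) (gradAlpha G α θ) c
            + inner (𝕜 := ℝ) (gradAlpha G α θ) (φ ω)) := by
      rw [hv, inner_neg_right, real_inner_smul_right, inner_add_right]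
      ring
    have hexp4 : ‖ᾱ' ω - α‖ ^ 2
        = η ^ 2 * (‖c‖ ^ 2 + 2 * inner (𝕜 := ℝ) c (φ ω) + ‖φ ω‖ ^ 2) := by
      rw [hv, norm_neg, norm_smul, Real.norm_eq_abs, mul_pow, sq_abs, norm_add_sq_real]
    rw [hexp3, hexp4] at dB
    nlinarith [dA, dB]
  -- integrate
  have hT1 : Integrable (fun ω => (-η) * inner (𝕜 := ℝ) (gradAlpha G α θ) (φ ω)) μ :=
    (hφinnerI (gradAlpha G α θ)).const_mul (-η)
  have hT2 : Integrable (fun ω => (L * η ^ 2) * inner (𝕜 := ℝ) c (φ ω)) μ :=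
    (hφinnerI c).const_mul (L * η ^ 2)
  have hT3 : Integrable (fun ω => (L * η ^ 2 / 2) * ‖φ ω‖ ^ 2) μ := hφsq.const_mul _
  have hT4 : Integrable (fun ω => (-(ν - L * ν ^ 2 / 2)) * ‖gradTheta G (ᾱ' ω) θ‖ ^ 2) μ :=
    hint2.const_mul _
  have hT5 : Integrable (fun ω => (L * ν ^ 2 - ν) * inner (𝕜 := ℝ) (gradTheta G (ᾱ' ω) θ) (ξ ω)) μ :=
    hgξI.const_mul _
  have hT6 : Integrable (fun ω => (L * ν ^ 2 / 2) * ‖ξ ω‖ ^ 2) μ := hξsq.const_mul _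
  have hS2 : Integrable (fun ω => (-η) * inner (𝕜 := ℝ) (gradAlpha G α θ) (φ ω)
      + (L * η ^ 2) * inner (𝕜 := ℝ) c (φ ω)) μ := hT1.add hT2
  have hS3 : Integrable (fun ω => (-η) * inner (𝕜 := ℝ) (gradAlpha G α θ) (φ ω)
      + (L * η ^ 2) * inner (𝕜 := ℝ) c (φ ω)
      + (L * η ^ 2 / 2) * ‖φ ω‖ ^ 2) μ := hS2.add hT3
  have hS4 : Integrable (fun ω => (-η) * inner (𝕜 := ℝ) (gradAlpha G α θ) (φ ω)
      + (L * η ^ 2) * inner (𝕜 := ℝ) c (φ ω)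
      + (L * η ^ 2 / 2) * ‖φ ω‖ ^ 2
      + (-(ν - L * ν ^ 2 / 2)) * ‖gradTheta G (ᾱ' ω) θ‖ ^ 2) μ := hS3.add hT4
  have hS5 : Integrable (fun ω => (-η) * inner (𝕜 := ℝ) (gradAlpha G α θ) (φ ω)
      + (L * η ^ 2) * inner (𝕜 := ℝ) c (φ ω)
      + (L * η ^ 2 / 2) * ‖φ ω‖ ^ 2
      + (-(ν - L * ν ^ 2 / 2)) * ‖gradTheta G (ᾱ' ω) θ‖ ^ 2
      + (L * ν ^ 2 - ν) * inner (𝕜 := ℝ) (gradTheta G (ᾱ' ω) θ) (ξ ω)) μ := hS4.add hT5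
  have hS6 : Integrable (fun ω => (-η) * inner (𝕜 := ℝ) (gradAlpha G α θ) (φ ω)
      + (L * η ^ 2) * inner (𝕜 := ℝ) c (φ ω)
      + (L * η ^ 2 / 2) * ‖φ ω‖ ^ 2
      + (-(ν - L * ν ^ 2 / 2)) * ‖gradTheta G (ᾱ' ω) θ‖ ^ 2
      + (L * ν ^ 2 - ν) * inner (𝕜 := ℝ) (gradTheta G (ᾱ' ω) θ) (ξ ω)
      + (L * ν ^ 2 / 2) * ‖ξ ω‖ ^ 2) μ := hS5.add hT6
  have hKS : Integrable (fun ω =>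
      (G α θ + (-η) * inner (𝕜 := ℝ) (gradAlpha G α θ) c + L * η ^ 2 / 2 * ‖c‖ ^ 2)
      + ((-η) * inner (𝕜 := ℝ) (gradAlpha G α θ) (φ ω)
      + (L * η ^ 2) * inner (𝕜 := ℝ) c (φ ω)
      + (L * η ^ 2 / 2) * ‖φ ω‖ ^ 2
      + (-(ν - L * ν ^ 2 / 2)) * ‖gradTheta G (ᾱ' ω) θ‖ ^ 2
      + (L * ν ^ 2 - ν) * inner (𝕜 := ℝ) (gradTheta G (ᾱ' ω) θ) (ξ ω)
      + (L * ν ^ 2 / 2) * ‖ξ ω‖ ^ 2)) μ := (integrable_const _).add hS6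
  have hIle := integral_mono hint1 hKS hpt
  simp only [integral_add (integrable_const (G α θ + (-η) * inner (𝕜 := ℝ) (gradAlpha G α θ) c + L * η ^ 2 / 2 * ‖c‖ ^ 2)) hS6, integral_add hS5 hT6,
    integral_add hS4 hT5, integral_add hS3 hT4, integral_add hS2 hT3,
    integral_add hT1 hT2, integral_const_mul, integral_const] at hIle
  rw [hφinner0 (gradAlpha G α θ), hφinner0 c, hgξ0] at hIle
  simp only [measure_univ, probReal_univ, ENNReal.toReal_one, one_smul, mul_zero, add_zero, zero_add] at hIle
  have e1 : 0 ≤ L * η ^ 2 / 2 := by positivity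
  have e2 : 0 ≤ L * ν ^ 2 / 2 := by positivity
  have b1 := mul_le_mul_of_nonneg_left hφvar e1
  have b2 := mul_le_mul_of_nonneg_left hξsqle e2
  have b3 := mul_le_mul_of_nonneg_left hAc hη
  have b4 := mul_le_mul_of_nonneg_left hcsq e1
  nlinarith [hIle, b1, b2, b3, b4]

end
end
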